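/- Let S be a finite set of points in the plane with distinct y-coordinates, let p_s be the lowest and p_t the highest point of S. Suppose every point of S other than p_s and p_t lies strictly to the right of the line through p_s and p_t. Let R be the right-envelope path of S (the points of S on the right part of the convex hull boundary, from p_s to p_t, in increasing y-order) and let L be the path from p_s to p_t visiting all points of S not on the right envelope, in increasing y-order. Then the union of L and R is a non-crossing monotone Hamiltonian cycle on S. -/

import Mathlib

open scoped BigOperators

abbrev Pt : Type := ℝ × ℝ

noncomputable section

/-- Signed cross product: positive iff `b` is strictly left of the directed line `o → a`. -/
def xprod (o a b : Pt) : ℝ := (a.1 - o.1) * (b.2 - o.2) - (a.2 - o.2) * (b.1 - o.1)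

/-- Closed straight-line segment between two points. -/
def Seg (p q : Pt) : Set Pt := segment ℝ p q

/-- Consecutive edges of a polyline given by a list of points. -/
def edgesOf (l : List Pt) : List (Pt × Pt) := l.zip l.tail

/-- The set of points covered by a polyline. -/
def polyPts (l : List Pt) : Set Pt := ⋃ e ∈ edgesOf l, Seg e.1 e.2

/-- A polyline is y-monotone: strictly increasing y-coordinates. -/
def MonoPath (l : List Pt) : Prop := l.Chain' (fun p q => p.2 < q.2)

/-- Two segments do not cross: any common point is an endpoint of both. -/
def SegNC (e f : Pt × Pt) : Prop :=
  ∀ x : Pt, x ∈ Seg e.1 e.2 → x ∈ Seg f.1 f.2 →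
    (x = e.1 ∨ x = e.2) ∧ (x = f.1 ∨ x = f.2)

/-- No two distinct segments among the edges of the two polylines cross. -/
def PolyNC (L R : List Pt) : Prop :=
  ∀ e ∈ edgesOf L ++ edgesOf R, ∀ f ∈ edgesOf L ++ edgesOf R, e ≠ f → SegNC e f

/-- The polyline `L` is (weakly) to the left of `R` at every intermediate height. -/
def LeftOf (L R : List Pt) (ps pt : Pt) : Prop :=
  ∀ p ∈ polyPts L, ∀ q ∈ polyPts R, p.2 = q.2 → ps.2 < p.2 → p.2 < pt.2 → p.1 < q.1

/-- All points of `S` have pairwise distinct y-coordinates. -/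
def DistinctY (S : Finset Pt) : Prop := ∀ p ∈ S, ∀ q ∈ S, p.2 = q.2 → p = q

/-- General position: no three distinct points of `S` are collinear. -/
def GenPos (S : Finset Pt) : Prop :=
  ∀ p ∈ S, ∀ q ∈ S, ∀ r ∈ S, p ≠ q → p ≠ r → q ≠ r → xprod p q r ≠ 0

def IsLowest (S : Finset Pt) (p : Pt) : Prop := p ∈ S ∧ ∀ q ∈ S, q ≠ p → p.2 < q.2

def IsHighest (S : Finset Pt) (p : Pt) : Prop := p ∈ S ∧ ∀ q ∈ S, q ≠ p → q.2 < p.2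

/-- Points of `S` on the boundary of the convex hull of `S`. -/
def hullPts (S : Finset Pt) : Set Pt :=
  {p | p ∈ S ∧ p ∈ frontier (convexHull ℝ (S : Set Pt))}

/-- The left envelope: hull-boundary points of `S` on or to the left of the line `ps pt`. -/
def leftEnvelope (S : Finset Pt) (ps pt : Pt) : Set Pt :=
  {p ∈ hullPts S | 0 ≤ xprod ps pt p}

/-- The right envelope: hull-boundary points of `S` on or to the right of the line `ps pt`. -/
def rightEnvelope (S : Finset Pt) (ps pt : Pt) : Set Pt :=
  {p ∈ hullPts S | xprod ps pt p ≤ 0}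

/-- A non-crossing monotone Hamiltonian cycle on `S`, given by its two monotone
paths `L` and `R` from the lowest point `ps` to the highest point `pt`. -/
structure IsNCMonoHamCycle (S : Finset Pt) (ps pt : Pt) (L R : List Pt) : Prop where
  monoL : MonoPath L
  monoR : MonoPath R
  headL : L.head? = some ps
  headR : R.head? = some ps
  lastL : L.getLast? = some pt
  lastR : R.getLast? = some pt
  nodupL : L.Nodup
  nodupR : R.Nodup
  cover : ∀ p : Pt, p ∈ S ↔ (p ∈ L ∨ p ∈ R)
  shared : ∀ p : Pt, p ∈ L → p ∈ R → p = ps ∨ p = pt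
  noncross : PolyNC L R

/-- An upward planar straight-line embedding of the digraph `(V, E)` on the pointset `S`. -/
structure IsUPSE {V : Type} (E : V → V → Prop) (S : Finset Pt) (f : V → Pt) : Prop where
  bij : Set.BijOn f Set.univ (S : Set Pt)
  upward : ∀ u v : V, E u v → (f u).2 < (f v).2
  planar : ∀ u v w z : V, E u v → E w z → (u, v) ≠ (w, z) → SegNC (f u, f v) (f w, f z)

/-- Undirected reachability in a digraph. -/
def UReach {V : Type} (E : V → V → Prop) (a b : V) : Prop :=
  Relation.ReflTransGen (fun x y => E x y ∨ E y x) a b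

/-- The digraph `E` with the edges of `W` removed. -/
def AvoidW {V : Type} (E : V → V → Prop) (W : Set (V × V)) : V → V → Prop :=
  fun a b => E a b ∧ (a, b) ∉ W

/-- `W` is an st-cutset: removing `W` leaves exactly two undirected components,
one containing `s` and one containing `t`, and every edge of `W` goes from the
`s`-side to the `t`-side. -/
def IsSTCutset {V : Type} (E : V → V → Prop) (s t : V) (W : Set (V × V)) : Prop :=
  (∀ e ∈ W, E e.1 e.2) ∧
  (∀ v : V, UReach (AvoidW E W) s v ∨ UReach (AvoidW E W) t v) ∧
  ¬ UReach (AvoidW E W) s t ∧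
  (∀ e ∈ W, UReach (AvoidW E W) s e.1 ∧ UReach (AvoidW E W) t e.2)

/-- A bipath on `Si`: two non-crossing monotone paths starting at `p1`,
internally disjoint, together covering `Si`, with `L` to the left of `R`. -/
structure IsBipath (Si : Finset Pt) (p1 : Pt) (L R : List Pt) : Prop where
  monoL : MonoPath L
  monoR : MonoPath R
  headL : L.head? = some p1
  headR : R.head? = some p1
  nodupL : L.Nodup
  nodupR : R.Nodup
  cover : ∀ p : Pt, p ∈ Si ↔ (p ∈ L ∨ p ∈ R)
  shared : ∀ p : Pt, p ∈ L → p ∈ R → p = p1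
  noncross : PolyNC L R
  leftOf : ∀ p ∈ polyPts L, ∀ q ∈ polyPts R, p.2 = q.2 → p1.2 < p.2 → p ≠ q → p.1 < q.1

/-- The bipath `(L, R)` on `Si` extends to the non-crossing monotone Hamiltonian
cycle `(L', R')` on `S`, i.e. the restriction of the cycle to `Si` is `(L, R)`. -/
def ExtendsTo (S Si : Finset Pt) (ps pt : Pt) (L R L' R' : List Pt) : Prop :=
  IsNCMonoHamCycle S ps pt L' R' ∧
  L <+: L' ∧ R <+: R' ∧
  (∀ p ∈ L', p ∈ Si ↔ p ∈ L) ∧ (∀ p ∈ R', p ∈ Si ↔ p ∈ R)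

end


section helperLemmas
open Set

lemma xprod_o (c d : Pt) : xprod c d c = 0 := by unfold xprod; ring
lemma xprod_b (c d : Pt) : xprod c d d = 0 := by unfold xprod; ring

lemma seg_coords {a b x : Pt} (h : x ∈ Seg a b) :
    ∃ u v : ℝ, 0 ≤ u ∧ 0 ≤ v ∧ u + v = 1 ∧ x.1 = u * a.1 + v * b.1 ∧ x.2 = u * a.2 + v * b.2 := by
  obtain ⟨u, v, hu, hv, huv, hx⟩ := h
  refine ⟨u, v, hu, hv, huv, ?_, ?_⟩ <;> rw [← hx] <;>
    simp [Prod.fst_add, Prod.snd_add, Prod.smul_fst, Prod.smul_snd, smul_eq_mul]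

lemma seg_y_le {a b x : Pt} (h : x ∈ Seg a b) (hab : a.2 ≤ b.2) : a.2 ≤ x.2 ∧ x.2 ≤ b.2 := by
  obtain ⟨u, v, hu, hv, huv, _, hy⟩ := seg_coords h
  have k1 : x.2 - a.2 = v * (b.2 - a.2) := by linear_combination hy + a.2 * huv
  have k2 : b.2 - x.2 = u * (b.2 - a.2) := by linear_combination (-1 : ℝ) * hy + (-b.2) * huv
  constructor
  · nlinarith [mul_nonneg hv (sub_nonneg.2 hab)]
  · nlinarith [mul_nonneg hu (sub_nonneg.2 hab)]

lemma seg_y_bot {a b x : Pt} (h : x ∈ Seg a b) (hab : a.2 < b.2) (hx : x.2 = a.2) : x = a := by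
  obtain ⟨u, v, hu, hv, huv, h1, h2⟩ := seg_coords h
  have k1 : x.2 - a.2 = v * (b.2 - a.2) := by linear_combination h2 + a.2 * huv
  have hv0 : v = 0 := by
    rcases eq_or_lt_of_le hv with h' | h'
    · exact h'.symm
    · nlinarith [mul_pos h' (sub_pos.2 hab)]
  have hu1 : u = 1 := by linarith
  rw [Prod.ext_iff]; constructor
  · rw [h1, hv0, hu1]; ring
  · exact hx

lemma seg_y_top {a b x : Pt} (h : x ∈ Seg a b) (hab : a.2 < b.2) (hx : x.2 = b.2) : x = b := by
  obtain ⟨u, v, hu, hv, huv, h1, h2⟩ := seg_coords h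
  have k2 : b.2 - x.2 = u * (b.2 - a.2) := by linear_combination (-1 : ℝ) * h2 + (-b.2) * huv
  have hu0 : u = 0 := by
    rcases eq_or_lt_of_le hu with h' | h'
    · exact h'.symm
    · nlinarith [mul_pos h' (sub_pos.2 hab)]
  have hv1 : v = 1 := by linarith
  rw [Prod.ext_iff]; constructor
  · rw [h1, hu0, hv1]; ring
  · exact hx

lemma xprod_of_coords {c d a b x : Pt} {u v : ℝ} (huv : u + v = 1)
    (h1 : x.1 = u * a.1 + v * b.1) (h2 : x.2 = u * a.2 + v * b.2) :
    xprod c d x = u * xprod c d a + v * xprod c d b := by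
  have hv : v = 1 - u := by linarith
  subst hv; unfold xprod; rw [h1, h2]; ring

lemma xprod_on_seg {c d x : Pt} (h : x ∈ Seg c d) : xprod c d x = 0 := by
  obtain ⟨u, v, _, _, huv, h1, h2⟩ := seg_coords h
  rw [xprod_of_coords huv h1 h2, xprod_o, xprod_b]; ring

lemma edgesOf_cons₂ (a b : Pt) (t : List Pt) :
    edgesOf (a :: b :: t) = (a, b) :: edgesOf (b :: t) := rfl

lemma mem_of_edge {l : List Pt} {e : Pt × Pt} (h : e ∈ edgesOf l) : e.1 ∈ l ∧ e.2 ∈ l := by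
  obtain ⟨a, b⟩ := e
  have := List.of_mem_zip h
  exact ⟨this.1, List.mem_of_mem_tail this.2⟩

lemma chain_head_le {y : Pt} {ys : List Pt} (h : MonoPath (y :: ys)) {u : Pt}
    (hu : u ∈ y :: ys) : y.2 ≤ u.2 := by
  induction ys generalizing y with
  | nil => simp at hu; simp [hu]
  | cons z t ih =>
    rcases List.mem_cons.1 hu with rfl | hu
    · exact le_refl _
    · have h1 : y.2 < z.2 := List.isChain_cons_cons.1 h |>.1
      have h2 := ih (List.isChain_cons_cons.1 h).2 hu
      linarith

lemma edge_lt {l : List Pt} (h : MonoPath l) {e : Pt × Pt} (he : e ∈ edgesOf l) :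
    e.1.2 < e.2.2 := by
  induction l with
  | nil => simp [edgesOf] at he
  | cons a t ih =>
    cases t with
    | nil => simp [edgesOf] at he
    | cons b t2 =>
      rw [edgesOf_cons₂] at he
      rcases List.mem_cons.1 he with rfl | he
      · exact (List.isChain_cons_cons.1 h).1
      · exact ih (List.isChain_cons_cons.1 h).2 he

lemma edges_sep {l : List Pt} (h : MonoPath l) {e f : Pt × Pt}
    (he : e ∈ edgesOf l) (hf : f ∈ edgesOf l) (hef : e ≠ f) :
    e.2.2 ≤ f.1.2 ∨ f.2.2 ≤ e.1.2 := by
  induction l with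
  | nil => simp [edgesOf] at he
  | cons a t ih =>
    cases t with
    | nil => simp [edgesOf] at he
    | cons b t2 =>
      have htl : MonoPath (b :: t2) := (List.isChain_cons_cons.1 h).2
      rw [edgesOf_cons₂] at he hf
      rcases List.mem_cons.1 he with rfl | he <;> rcases List.mem_cons.1 hf with rfl | hf
      · exact absurd rfl hef
      · exact Or.inl (chain_head_le htl (mem_of_edge hf).1)
      · exact Or.inr (chain_head_le htl (mem_of_edge he).1)
      · exact ih htl he hf

lemma adj_sep {l : List Pt} (h : MonoPath l) {e : Pt × Pt} (he : e ∈ edgesOf l)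
    {u : Pt} (hu : u ∈ l) : u.2 ≤ e.1.2 ∨ e.2.2 ≤ u.2 := by
  induction l with
  | nil => simp [edgesOf] at he
  | cons a t ih =>
    cases t with
    | nil => simp [edgesOf] at he
    | cons b t2 =>
      have htl : MonoPath (b :: t2) := (List.isChain_cons_cons.1 h).2
      have hab : a.2 < b.2 := (List.isChain_cons_cons.1 h).1
      rw [edgesOf_cons₂] at he
      rcases List.mem_cons.1 he with h1 | h1
      · subst h1
        rcases List.mem_cons.1 hu with h2 | h2
        · exact Or.inl (le_of_eq (by rw [h2]))
        · exact Or.inr (chain_head_le htl h2)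
      · rcases List.mem_cons.1 hu with h2 | h2
        · exact Or.inl (h2 ▸ le_of_lt (lt_of_lt_of_le hab (chain_head_le htl (mem_of_edge h1).1)))
        · exact ih htl h1 h2

open Set

lemma xprod_cont (a b : Pt) : Continuous fun x : Pt => xprod a b x := by
  unfold xprod; fun_prop

lemma hull_halfplane {S : Finset Pt} {c d : Pt} {μ : ℝ}
    (h : ∀ p ∈ S, μ ≤ xprod c d p) :
    convexHull ℝ (S : Set Pt) ⊆ {x : Pt | μ ≤ xprod c d x} := by
  apply convexHull_min h
  intro x hx y hy u v hu hv huv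
  have hx' : μ ≤ xprod c d x := hx
  have hy' : μ ≤ xprod c d y := hy
  show μ ≤ xprod c d (u • x + v • y)
  have hc : xprod c d (u • x + v • y) = u * xprod c d x + v * xprod c d y := by
    apply xprod_of_coords huv <;>
      simp [Prod.fst_add, Prod.snd_add, Prod.smul_fst, Prod.smul_snd, smul_eq_mul]
  have hμ : u * μ + v * μ = μ := by rw [← add_mul, huv, one_mul]
  nlinarith [mul_le_mul_of_nonneg_left hx' hu, mul_le_mul_of_nonneg_left hy' hv]

lemma not_interior_of_min {S : Finset Pt} {c d q : Pt} (hy : c.2 ≠ d.2)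
    (hmin : ∀ p ∈ S, xprod c d q ≤ xprod c d p) :
    q ∉ interior (convexHull ℝ (S : Set Pt)) := by
  intro hq
  obtain ⟨ε, hε, hball⟩ := Metric.isOpen_iff.1 isOpen_interior q hq
  set dx := d.1 - c.1 with hdx
  set dy := d.2 - c.2 with hdy
  have hdy0 : dy ≠ 0 := sub_ne_zero.2 (Ne.symm hy)
  have hm : 0 < |dx| + |dy| := by
    have := abs_pos.2 hdy0
    have := abs_nonneg dx
    linarith
  set δ := ε / (2 * (|dx| + |dy|)) with hδ
  have hδpos : 0 < δ := by positivity
  set q' : Pt := (q.1 + δ * dy, q.2 - δ * dx) with hq'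
  have hball' : q' ∈ Metric.ball q ε := by
    rw [Metric.mem_ball, Prod.dist_eq, Real.dist_eq, Real.dist_eq]
    have h1 : |q.1 + δ * dy - q.1| = δ * |dy| := by
      rw [show q.1 + δ * dy - q.1 = δ * dy by ring, abs_mul, abs_of_pos hδpos]
    have h2 : |q.2 - δ * dx - q.2| = δ * |dx| := by
      rw [show q.2 - δ * dx - q.2 = -(δ * dx) by ring, abs_neg, abs_mul, abs_of_pos hδpos]
    have hd : δ * (|dx| + |dy|) = ε / 2 := by
      rw [hδ]; field_simp
    rw [h1, h2]
    apply max_lt <;> nlinarith [abs_nonneg dx, abs_nonneg dy]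
  have hmem : q' ∈ convexHull ℝ (S : Set Pt) := interior_subset (hball hball')
  have hle := hull_halfplane hmin hmem
  simp only [mem_setOf_eq] at hle
  have hval : xprod c d q' = xprod c d q - δ * (dx ^ 2 + dy ^ 2) := by
    rw [hq']; unfold xprod; rw [hdx, hdy]; ring
  nlinarith [sq_nonneg dx, sq_nonneg dy, sq_abs dy, abs_pos.2 hdy0, sq_pos_of_ne_zero hdy0]

lemma tri_interior {S : Finset Pt} {P1 P2 P3 v : Pt}
    (h1 : P1 ∈ convexHull ℝ (S : Set Pt)) (h2 : P2 ∈ convexHull ℝ (S : Set Pt))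
    (h3 : P3 ∈ convexHull ℝ (S : Set Pt))
    (hv1 : 0 < xprod P1 P2 v) (hv2 : 0 < xprod P2 P3 v) (hv3 : 0 < xprod P3 P1 v) :
    v ∈ interior (convexHull ℝ (S : Set Pt)) := by
  set U : Set Pt := {x | 0 < xprod P1 P2 x ∧ 0 < xprod P2 P3 x ∧ 0 < xprod P3 P1 x} with hU
  have hUopen : IsOpen U := by
    have e1 : IsOpen {x : Pt | 0 < xprod P1 P2 x} :=
      isOpen_lt continuous_const (xprod_cont P1 P2)
    have e2 : IsOpen {x : Pt | 0 < xprod P2 P3 x} :=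
      isOpen_lt continuous_const (xprod_cont P2 P3)
    have e3 : IsOpen {x : Pt | 0 < xprod P3 P1 x} :=
      isOpen_lt continuous_const (xprod_cont P3 P1)
    have : U = {x : Pt | 0 < xprod P1 P2 x} ∩ ({x : Pt | 0 < xprod P2 P3 x} ∩ {x : Pt | 0 < xprod P3 P1 x}) := by
      ext x; simp [hU, and_assoc]
    rw [this]; exact e1.inter (e2.inter e3)
  have hsub : U ⊆ convexHull ℝ (S : Set Pt) := by
    intro x hx
    obtain ⟨g1, g2, g3⟩ := hx
    have hsum : xprod P2 P3 x + xprod P3 P1 x + xprod P1 P2 x = xprod P1 P2 P3 := by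
      unfold xprod; ring
    set s := xprod P2 P3 x with hs
    set t := xprod P3 P1 x with ht
    set w := xprod P1 P2 x with hw
    have hD : 0 < s + t + w := by positivity
    have htw : 0 < t + w := by positivity
    -- barycentric identity
    have hbar1 : s * P1.1 + t * P2.1 + w * P3.1 = (s + t + w) * x.1 := by
      rw [hs, ht, hw]; unfold xprod; ring
    have hbar2 : s * P1.2 + t * P2.2 + w * P3.2 = (s + t + w) * x.2 := by
      rw [hs, ht, hw]; unfold xprod; ring
    have hz : (t / (t + w)) • P2 + (w / (t + w)) • P3 ∈ convexHull ℝ (S : Set Pt) :=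
      (convex_convexHull ℝ _) h2 h3 (by positivity) (by positivity) (by field_simp)
    have hkey : x = (s / (s + t + w)) • P1 +
        ((t + w) / (s + t + w)) • ((t / (t + w)) • P2 + (w / (t + w)) • P3) := by
      rw [Prod.ext_iff]
      constructor
      · simp only [Prod.fst_add, Prod.snd_add, Prod.smul_fst, Prod.smul_snd, smul_eq_mul]
        field_simp
        linear_combination (-1 : ℝ) * hbar1
      · simp only [Prod.fst_add, Prod.snd_add, Prod.smul_fst, Prod.smul_snd, smul_eq_mul]
        field_simp
        linear_combination (-1 : ℝ) * hbar2
    rw [hkey]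
    exact (convex_convexHull ℝ _) h1 hz (by positivity) (by positivity) (by field_simp; ring)
  exact mem_interior.2 ⟨U, hsub, hUopen, ⟨hv1, hv2, hv3⟩⟩

lemma exists_chord {a b : Pt} (hy : a.2 < b.2) {h : ℝ} (h1 : a.2 ≤ h) (h2 : h ≤ b.2) :
    ∃ B ∈ Seg a b, B.2 = h ∧ ∀ v : Pt, v.2 = h → 0 < xprod a b v → v.1 < B.1 := by
  have hb : 0 < b.2 - a.2 := by linarith
  set t := (h - a.2) / (b.2 - a.2) with htdef
  have ht0 : 0 ≤ t := div_nonneg (by linarith) hb.le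
  have ht1 : t ≤ 1 := by rw [htdef, div_le_one hb]; linarith
  have hteq : t * (b.2 - a.2) = h - a.2 := by rw [htdef]; field_simp
  refine ⟨(1 - t) • a + t • b, ⟨1 - t, t, by linarith, ht0, by ring, rfl⟩, ?_, ?_⟩
  · show ((1 - t) • a + t • b).2 = h
    simp only [Prod.snd_add, Prod.smul_snd, smul_eq_mul]
    linear_combination hteq
  · intro v hv hx
    show v.1 < ((1 - t) • a + t • b).1
    simp only [Prod.fst_add, Prod.smul_fst, smul_eq_mul]
    unfold xprod at hx
    rw [hv] at hx
    have key : (b.2 - a.2) * ((1 - t) * a.1 + t * b.1 - v.1)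
        = (b.1 - a.1) * (h - a.2) - (b.2 - a.2) * (v.1 - a.1) := by
      linear_combination (b.1 - a.1) * hteq
    nlinarith [key, hb, hx]

lemma mid_interior {S : Finset Pt} {ps pt v B : Pt}
    (hps : ps ∈ S) (hpt : pt ∈ S) (hB : B ∈ convexHull ℝ (S : Set Pt))
    (h1 : ps.2 < v.2) (h2 : v.2 < pt.2) (hx : xprod ps pt v < 0)
    (hBy : B.2 = v.2) (hBx : v.1 < B.1) :
    v ∈ interior (convexHull ℝ (S : Set Pt)) := by
  apply tri_interior (P1 := pt) (P2 := ps) (P3 := B)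
    (subset_convexHull ℝ _ hpt) (subset_convexHull ℝ _ hps) hB
  · have hswap : xprod pt ps v = -xprod ps pt v := by unfold xprod; ring
    linarith [hswap]
  · unfold xprod; rw [hBy]; nlinarith
  · unfold xprod; rw [hBy]; nlinarith


lemma segnc_symm {e f : Pt × Pt} (h : SegNC e f) : SegNC f e :=
  fun x hf he => ⟨(h x he hf).2, (h x he hf).1⟩

lemma mono_nc {l : List Pt} (h : MonoPath l) {e f : Pt × Pt}
    (he : e ∈ edgesOf l) (hf : f ∈ edgesOf l) (hef : e ≠ f) : SegNC e f := by
  intro x hxe hxf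
  have h1 := edge_lt h he
  have h2 := edge_lt h hf
  rcases edges_sep h he hf hef with hle | hle
  · have hb1 := (seg_y_le hxe h1.le).2
    have hb2 := (seg_y_le hxf h2.le).1
    have hx2 : x.2 = e.2.2 := by linarith
    have hx2' : x.2 = f.1.2 := by linarith
    exact ⟨Or.inr (seg_y_top hxe h1 hx2), Or.inl (seg_y_bot hxf h2 hx2')⟩
  · have hb1 := (seg_y_le hxe h1.le).1
    have hb2 := (seg_y_le hxf h2.le).2
    have hx2 : x.2 = e.1.2 := by linarith
    have hx2' : x.2 = f.2.2 := by linarith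
    exact ⟨Or.inl (seg_y_bot hxe h1 hx2), Or.inr (seg_y_top hxf h2 hx2')⟩

lemma support {S : Finset Pt} (hy : DistinctY S) {ps pt : Pt}
    (hs : IsLowest S ps) (ht : IsHighest S pt)
    (hright : ∀ q ∈ S, q ≠ ps → q ≠ pt → xprod ps pt q < 0)
    {R : List Pt} (hRmono : MonoPath R)
    (hRmem : ∀ p : Pt, p ∈ R ↔ p ∈ hullPts S)
    {c d : Pt} (he : (c, d) ∈ edgesOf R) :
    ∀ q ∈ S, 0 ≤ xprod c d q := by
  intro q hq
  by_contra hneg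
  push_neg at hneg
  have hlow : ∀ p ∈ S, ps.2 ≤ p.2 := by
    intro p hp
    by_cases hps : p = ps
    · rw [hps]
    · exact le_of_lt (hs.2 p hp hps)
  have hhigh : ∀ p ∈ S, p.2 ≤ pt.2 := by
    intro p hp
    by_cases hpt : p = pt
    · rw [hpt]
    · exact le_of_lt (ht.2 p hp hpt)
  have hcd : c.2 < d.2 := edge_lt hRmono he
  have hcR : c ∈ R := (mem_of_edge he).1
  have hdR : d ∈ R := (mem_of_edge he).2
  have hcH := (hRmem c).1 hcR
  have hdH := (hRmem d).1 hdR
  have hcS : c ∈ S := hcH.1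
  have hdS : d ∈ S := hdH.1
  obtain ⟨m, hmS, hmin⟩ := S.exists_min_image (fun p => xprod c d p) ⟨ps, hs.1⟩
  have hμ : xprod c d m < 0 := lt_of_le_of_lt (hmin q hq) hneg
  have hm_not_int := not_interior_of_min (ne_of_lt hcd) hmin
  have hm_front : m ∈ frontier (convexHull ℝ (S : Set Pt)) :=
    ⟨subset_closure (subset_convexHull ℝ _ hmS), hm_not_int⟩
  have hmR : m ∈ R := (hRmem m).2 ⟨hmS, hm_front⟩
  have hm_ne_c : m ≠ c := by intro h; rw [h, xprod_o] at hμ; linarith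
  have hm_ne_d : m ≠ d := by intro h; rw [h, xprod_b] at hμ; linarith
  have hmc : m.2 ≠ c.2 := fun h => hm_ne_c (hy m hmS c hcS h)
  have hmd : m.2 ≠ d.2 := fun h => hm_ne_d (hy m hmS d hdS h)
  rcases adj_sep hRmono he hmR with hsep | hsep
  · -- m below c : show c ∈ interior, contradiction with c on frontier
    have hm2 : m.2 < c.2 := lt_of_le_of_ne hsep hmc
    obtain ⟨B, hBseg, hBy, hBlt⟩ := exists_chord (show m.2 < d.2 by linarith)
      (le_of_lt hm2) (le_of_lt hcd)
    have hBhull : B ∈ convexHull ℝ (S : Set Pt) :=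
      (convex_convexHull ℝ _).segment_subset
        (subset_convexHull ℝ _ hmS) (subset_convexHull ℝ _ hdS) hBseg
    have hrot : xprod m d c = -xprod c d m := by unfold xprod; ring
    have hcB : c.1 < B.1 := hBlt c rfl (by rw [hrot]; linarith)
    have hcps : c ≠ ps := by
      intro h; have := hlow m hmS; rw [h] at hm2; linarith
    have hcpt : c ≠ pt := by
      intro h; have := hhigh d hdS; rw [h] at hcd; linarith
    have hps2 : ps.2 < c.2 := lt_of_le_of_lt (hlow m hmS) hm2
    have hpt2 : c.2 < pt.2 := lt_of_lt_of_le hcd (hhigh d hdS)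
    have hint := mid_interior hs.1 ht.1 hBhull hps2 hpt2
      (hright c hcS hcps hcpt) hBy hcB
    exact hcH.2.2 hint
  · -- m above d : show d ∈ interior
    have hm2 : d.2 < m.2 := lt_of_le_of_ne hsep (Ne.symm hmd)
    obtain ⟨B, hBseg, hBy, hBlt⟩ := exists_chord (show c.2 < m.2 by linarith)
      (le_of_lt hcd) (le_of_lt hm2)
    have hBhull : B ∈ convexHull ℝ (S : Set Pt) :=
      (convex_convexHull ℝ _).segment_subset
        (subset_convexHull ℝ _ hcS) (subset_convexHull ℝ _ hmS) hBseg
    have hrot : xprod c m d = -xprod c d m := by unfold xprod; ring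
    have hdB : d.1 < B.1 := hBlt d rfl (by rw [hrot]; linarith)
    have hdps : d ≠ ps := by
      intro h; have := hlow c hcS; rw [h] at hcd; linarith
    have hdpt : d ≠ pt := by
      intro h; have := hhigh m hmS; rw [h] at hm2; linarith
    have hps2 : ps.2 < d.2 := lt_of_le_of_lt (hlow c hcS) hcd
    have hpt2 : d.2 < pt.2 := lt_of_lt_of_le hm2 (hhigh m hmS)
    have hint := mid_interior hs.1 ht.1 hBhull hps2 hpt2
      (hright d hdS hdps hdpt) hBy hdB
    exact hdH.2.2 hint

set_option maxHeartbeats 1600000 in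
lemma cross_nc {S : Finset Pt} (hy : DistinctY S) {ps pt : Pt}
    (hs : IsLowest S ps) (ht : IsHighest S pt)
    (hright : ∀ q ∈ S, q ≠ ps → q ≠ pt → xprod ps pt q < 0)
    {R : List Pt} (hRmono : MonoPath R)
    (hRmem : ∀ p : Pt, p ∈ R ↔ p ∈ hullPts S)
    {L : List Pt} (hLmono : MonoPath L)
    (hLmem : ∀ p : Pt, p ∈ L ↔ (p = ps ∨ p = pt ∨ (p ∈ S ∧ p ∉ R)))
    {e f : Pt × Pt} (he : e ∈ edgesOf L) (hf : f ∈ edgesOf R) (hef : e ≠ f) :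
    SegNC e f := by
  obtain ⟨a, b⟩ := e; obtain ⟨c, d⟩ := f
  intro x hxab hxcd
  have hlow : ∀ p ∈ S, ps.2 ≤ p.2 := by
    intro p hp
    by_cases hps : p = ps
    · rw [hps]
    · exact le_of_lt (hs.2 p hp hps)
  have hhigh : ∀ p ∈ S, p.2 ≤ pt.2 := by
    intro p hp
    by_cases hpt : p = pt
    · rw [hpt]
    · exact le_of_lt (ht.2 p hp hpt)
  have hSL : ∀ p ∈ L, p ∈ S := by
    intro p hp
    rcases (hLmem p).1 hp with rfl | rfl | hp'
    exacts [hs.1, ht.1, hp'.1]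
  have hsupp := support hy hs ht hright hRmono hRmem hf
  have hab : a.2 < b.2 := edge_lt hLmono he
  have hcd : c.2 < d.2 := edge_lt hRmono hf
  have haL : a ∈ L := (mem_of_edge he).1
  have hbL : b ∈ L := (mem_of_edge he).2
  have haS : a ∈ S := hSL a haL
  have hbS : b ∈ S := hSL b hbL
  have hcS : c ∈ S := ((hRmem c).1 (mem_of_edge hf).1).1
  have hdS : d ∈ S := ((hRmem d).1 (mem_of_edge hf).2).1
  have hA : 0 ≤ xprod c d a := hsupp a haS
  have hBv : 0 ≤ xprod c d b := hsupp b hbS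
  obtain ⟨u, v, hu, hv, huv, hx1, hx2⟩ := seg_coords hxab
  have hcomb : xprod c d x = u * xprod c d a + v * xprod c d b :=
    xprod_of_coords huv hx1 hx2
  have hx0 : xprod c d x = 0 := xprod_on_seg hxcd
  have hzp1 : u * xprod c d a = 0 := by
    nlinarith [mul_nonneg hu hA, mul_nonneg hv hBv]
  have hzp2 : v * xprod c d b = 0 := by
    nlinarith [mul_nonneg hu hA, mul_nonneg hv hBv]
  have key : ∀ p ∈ L, xprod c d p = 0 → p = ps ∨ p = pt := by
    intro p hpL hp0
    have hpS := hSL p hpL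
    have hnint : p ∉ interior (convexHull ℝ (S : Set Pt)) :=
      not_interior_of_min (ne_of_lt hcd) (fun r hr => by rw [hp0]; exact hsupp r hr)
    have hpR : p ∈ R := (hRmem p).2
      ⟨hpS, subset_closure (subset_convexHull ℝ _ hpS), hnint⟩
    rcases (hLmem p).1 hpL with h | h | h
    · exact Or.inl h
    · exact Or.inr h
    · exact absurd hpR h.2
  rcases eq_or_lt_of_le hu with hu0 | hupos
  · -- u = 0 : x = b
    have hv1 : v = 1 := by linarith
    have hxb : x = b := by
      rw [Prod.ext_iff]
      constructor
      · rw [hx1, ← hu0, hv1]; ring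
      · rw [hx2, ← hu0, hv1]; ring
    have hb0 : xprod c d b = 0 := by rw [hv1, one_mul] at hzp2; exact hzp2
    rcases key b hbL hb0 with hbps | hbpt
    · have hxc : x = c := by
        apply seg_y_bot hxcd hcd
        have h1 := (seg_y_le hxcd hcd.le).1
        have h2 := hlow c hcS
        rw [hxb, hbps] at h1 ⊢
        linarith
      exact ⟨Or.inr hxb, Or.inl hxc⟩
    · have hxd : x = d := by
        apply seg_y_top hxcd hcd
        have h1 := (seg_y_le hxcd hcd.le).2
        have h2 := hhigh d hdS
        rw [hxb, hbpt] at h1 ⊢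
        linarith
      exact ⟨Or.inr hxb, Or.inr hxd⟩
  · rcases eq_or_lt_of_le hv with hv0 | hvpos
    · -- v = 0 : x = a
      have hu1 : u = 1 := by linarith
      have hxa : x = a := by
        rw [Prod.ext_iff]
        constructor
        · rw [hx1, ← hv0, hu1]; ring
        · rw [hx2, ← hv0, hu1]; ring
      have ha0 : xprod c d a = 0 := by rw [hu1, one_mul] at hzp1; exact hzp1
      rcases key a haL ha0 with haps | hapt
      · have hxc : x = c := by
          apply seg_y_bot hxcd hcd
          have h1 := (seg_y_le hxcd hcd.le).1
          have h2 := hlow c hcS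
          rw [hxa, haps] at h1 ⊢
          linarith
        exact ⟨Or.inl hxa, Or.inl hxc⟩
      · have hxd : x = d := by
          apply seg_y_top hxcd hcd
          have h1 := (seg_y_le hxcd hcd.le).2
          have h2 := hhigh d hdS
          rw [hxa, hapt] at h1 ⊢
          linarith
        exact ⟨Or.inl hxa, Or.inr hxd⟩
    · -- u > 0 and v > 0 : a and b both on the support line
      have ha0 : xprod c d a = 0 := by
        rcases mul_eq_zero.1 hzp1 with h | h
        · exact absurd h (ne_of_gt hupos)
        · exact h
      have hb0 : xprod c d b = 0 := by
        rcases mul_eq_zero.1 hzp2 with h | h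
        · exact absurd h (ne_of_gt hvpos)
        · exact h
      have haps : a = ps := by
        rcases key a haL ha0 with h | h
        · exact h
        · exfalso; rw [h] at hab; have := hhigh b hbS; linarith
      have hbpt : b = pt := by
        rcases key b hbL hb0 with h | h
        · exfalso; rw [h] at hab; have := hlow a haS; linarith
        · exact h
      subst haps; subst hbpt
      have hline : xprod a b x = 0 := xprod_on_seg hxab
      obtain ⟨u', v', hu', hv', huv', hy1, hy2⟩ := seg_coords hxcd
      have hcomb2 : xprod a b x = u' * xprod a b c + v' * xprod a b d :=
        xprod_of_coords huv' hy1 hy2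
      have hle0 : ∀ r ∈ S, xprod a b r ≤ 0 := by
        intro r hr
        by_cases h1 : r = a
        · rw [h1, xprod_o]
        · by_cases h2 : r = b
          · rw [h2, xprod_b]
          · exact le_of_lt (hright r hr h1 h2)
      have hzero2 : ∀ r ∈ S, xprod a b r = 0 → r = a ∨ r = b := by
        intro r hr h0
        by_contra hcon
        push_neg at hcon
        have := hright r hr hcon.1 hcon.2
        linarith
      have hC := hle0 c hcS
      have hD := hle0 d hdS
      have hzq1 : u' * xprod a b c = 0 := by
        nlinarith [mul_nonpos_of_nonneg_of_nonpos hu' hC,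
          mul_nonpos_of_nonneg_of_nonpos hv' hD]
      have hzq2 : v' * xprod a b d = 0 := by
        nlinarith [mul_nonpos_of_nonneg_of_nonpos hu' hC,
          mul_nonpos_of_nonneg_of_nonpos hv' hD]
      rcases eq_or_lt_of_le hu' with hu'0 | hu'pos
      · -- x = d
        have hv'1 : v' = 1 := by linarith
        have hxd : x = d := by
          rw [Prod.ext_iff]
          constructor
          · rw [hy1, ← hu'0, hv'1]; ring
          · rw [hy2, ← hu'0, hv'1]; ring
        have hd0 : xprod a b d = 0 := by rw [hv'1, one_mul] at hzq2; exact hzq2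
        rcases hzero2 d hdS hd0 with h | h
        · exfalso; rw [h] at hcd; have := hlow c hcS; linarith
        · exact ⟨Or.inr (by rw [hxd, h]), Or.inr hxd⟩
      · rcases eq_or_lt_of_le hv' with hv'0 | hv'pos
        · -- x = c
          have hu'1 : u' = 1 := by linarith
          have hxc : x = c := by
            rw [Prod.ext_iff]
            constructor
            · rw [hy1, ← hv'0, hu'1]; ring
            · rw [hy2, ← hv'0, hu'1]; ring
          have hc0 : xprod a b c = 0 := by rw [hu'1, one_mul] at hzq1; exact hzq1
          rcases hzero2 c hcS hc0 with h | h
          · exact ⟨Or.inl (by rw [hxc, h]), Or.inl hxc⟩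
          · exfalso; rw [h] at hcd; have := hhigh d hdS; linarith
        · -- u', v' > 0 : c = a and d = b, contradicting e ≠ f
          have hc0 : xprod a b c = 0 := by
            rcases mul_eq_zero.1 hzq1 with h | h
            · exact absurd h (ne_of_gt hu'pos)
            · exact h
          have hd0 : xprod a b d = 0 := by
            rcases mul_eq_zero.1 hzq2 with h | h
            · exact absurd h (ne_of_gt hv'pos)
            · exact h
          have hca : c = a := by
            rcases hzero2 c hcS hc0 with h | h
            · exact h
            · exfalso; rw [h] at hcd; have := hhigh d hdS; linarith
          have hdb : d = b := by
            rcases hzero2 d hdS hd0 with h | h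
            · exfalso; rw [h] at hcd; have := hlow c hcS; linarith
            · exact h
          exact absurd (by rw [hca, hdb]) hef

end helperLemmas

/-- if all points of `S` other than the extremes lie strictly to
the right of the line through the extremes, then the right-envelope path `R`
together with the monotone path `L` through the remaining points forms a
non-crossing monotone Hamiltonian cycle on `S`. -/
theorem stmt_15 (S : Finset Pt) (hy : DistinctY S)
    (ps pt : Pt) (hs : IsLowest S ps) (ht : IsHighest S pt)
    (hright : ∀ q ∈ S, q ≠ ps → q ≠ pt → xprod ps pt q < 0)
    (R : List Pt) (hRmono : MonoPath R) (hRnd : R.Nodup)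
    (hRh : R.head? = some ps) (hRl : R.getLast? = some pt)
    (hRmem : ∀ p : Pt, p ∈ R ↔ p ∈ hullPts S)
    (L : List Pt) (hLmono : MonoPath L) (hLnd : L.Nodup)
    (hLh : L.head? = some ps) (hLl : L.getLast? = some pt)
    (hLmem : ∀ p : Pt, p ∈ L ↔ (p = ps ∨ p = pt ∨ (p ∈ S ∧ p ∉ R))) :
    IsNCMonoHamCycle S ps pt L R := by
  have hSL : ∀ p ∈ L, p ∈ S := by
    intro p hp
    rcases (hLmem p).1 hp with rfl | rfl | hp'
    exacts [hs.1, ht.1, hp'.1]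
  refine ⟨hLmono, hRmono, hLh, hRh, hLl, hRl, hLnd, hRnd, ?_, ?_, ?_⟩
  · intro p
    constructor
    · intro hp
      by_cases hR : p ∈ R
      · exact Or.inr hR
      · exact Or.inl ((hLmem p).2 (Or.inr (Or.inr ⟨hp, hR⟩)))
    · rintro (hp | hp)
      · exact hSL p hp
      · exact ((hRmem p).1 hp).1
  · intro p hpL hpR
    rcases (hLmem p).1 hpL with h | h | h
    · exact Or.inl h
    · exact Or.inr h
    · exact absurd hpR h.2
  · intro e he f hf hef
    rcases List.mem_append.1 he with heL | heR <;>
      rcases List.mem_append.1 hf with hfL | hfR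
    · exact mono_nc hLmono heL hfL hef
    · exact cross_nc hy hs ht hright hRmono hRmem hLmono hLmem heL hfR hef
    · exact segnc_symm
        (cross_nc hy hs ht hright hRmono hRmem hLmono hLmem hfL heR (Ne.symm hef))
    · exact mono_nc hRmono heR hfR hef
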